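/- Let n ≥ 1 and let A be a real n×n matrix such that every complex eigenvalue λ of A satisfies Re λ < 0. Then A is invertible, the function τ ↦ exp(τ*A) is integrable on [0, ∞) (entrywise, equivalently in operator norm), and ∫₀^∞ exp(τ*A) dτ = −A⁻¹. -/

import Mathlib

open MeasureTheory

open NormedSpace Matrix Set Filter Topology

namespace S6
attribute [local instance] Matrix.linftyOpNormedRing Matrix.linftyOpNormedAlgebra

variable {N : ℕ}

lemma exp_mulVec_eigvec {M : Matrix (Fin N) (Fin N) ℂ} {c : ℂ} {w : Fin N → ℂ}
    (h : M *ᵥ w = c • w) : exp M *ᵥ w = Complex.exp c • w := by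
  have hpow : ∀ k : ℕ, (M ^ k) *ᵥ w = (c ^ k) • w := by
    intro k; induction k with
    | zero => simp
    | succ k ih =>
      rw [pow_succ', ← Matrix.mulVec_mulVec, ih, Matrix.mulVec_smul, h, smul_smul, pow_succ,
        mul_comm]
  let φ : Matrix (Fin N) (Fin N) ℂ →ₗ[ℂ] (Fin N → ℂ) :=
    { toFun := fun X => X *ᵥ w,
      map_add' := fun X Y => Matrix.add_mulVec X Y w,
      map_smul' := fun c X => Matrix.smul_mulVec c X w }
  let φL : Matrix (Fin N) (Fin N) ℂ →L[ℂ] (Fin N → ℂ) := LinearMap.toContinuousLinearMap φ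
  have h1 : exp M *ᵥ w = φL (∑' k : ℕ, ((Nat.factorial k : ℂ))⁻¹ • M ^ k) := by
    rw [exp_eq_tsum ℂ]; rfl
  rw [h1, φL.map_tsum (expSeries_summable' M)]
  have h2 : ∀ k : ℕ, φL (((Nat.factorial k : ℂ))⁻¹ • M ^ k)
      = (((Nat.factorial k : ℂ))⁻¹ * c ^ k) • w := by
    intro k
    rw [show φL ((((Nat.factorial k : ℂ)))⁻¹ • M ^ k) = ((Nat.factorial k : ℂ))⁻¹ • (M ^ k *ᵥ w)
      from φL.map_smul _ _, hpow k, smul_smul]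
  rw [tsum_congr h2, Summable.tsum_smul_const]
  · congr 1
    have : Complex.exp c = exp c := by rw [Complex.exp_eq_exp_ℂ]
    rw [this, exp_eq_tsum ℂ]
    simp [smul_eq_mul]
  · have := expSeries_summable' (𝕂 := ℂ) c
    simpa [smul_eq_mul] using this

lemma algebraMap_mulVec (μ : ℂ) (v : Fin N → ℂ) :
    algebraMap ℂ (Matrix (Fin N) (Fin N) ℂ) μ *ᵥ v = μ • v := by
  rw [Algebra.algebraMap_eq_smul_one, Matrix.smul_mulVec, Matrix.one_mulVec]

lemma exists_eigvec {B : Matrix (Fin N) (Fin N) ℂ} {μ : ℂ}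
    (h : μ ∈ spectrum ℂ B) : ∃ v, v ≠ 0 ∧ B *ᵥ v = μ • v := by
  rw [spectrum.mem_iff, Matrix.isUnit_iff_isUnit_det, isUnit_iff_ne_zero, not_not] at h
  obtain ⟨v, hv, hv0⟩ := Matrix.exists_mulVec_eq_zero_iff.mpr h
  refine ⟨v, hv, ?_⟩
  rw [Matrix.sub_mulVec, algebraMap_mulVec, sub_eq_zero] at hv0
  exact hv0.symm

lemma mem_spectrum_of_eigvec {B : Matrix (Fin N) (Fin N) ℂ} {μ : ℂ} {v : Fin N → ℂ}
    (hv : v ≠ 0) (h : B *ᵥ v = μ • v) : μ ∈ spectrum ℂ B := by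
  rw [spectrum.mem_iff, Matrix.isUnit_iff_isUnit_det, isUnit_iff_ne_zero, not_not,
    ← Matrix.exists_mulVec_eq_zero_iff]
  exact ⟨v, hv, by rw [Matrix.sub_mulVec, algebraMap_mulVec, h, sub_self]⟩

lemma spectrum_exp_subset {M : Matrix (Fin N) (Fin N) ℂ} {μ : ℂ}
    (h : μ ∈ spectrum ℂ (exp M)) : ∃ c ∈ spectrum ℂ M, μ = Complex.exp c := by
  obtain ⟨v, hv, hBv⟩ := exists_eigvec h
  set S : Matrix (Fin N) (Fin N) ℂ := μ • (1 : Matrix (Fin N) (Fin N) ℂ) - exp M with hS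
  set E : Submodule ℂ (Fin N → ℂ) := LinearMap.ker S.mulVecLin with hE
  have hmemE : ∀ x, x ∈ E ↔ S *ᵥ x = 0 := fun x => by
    rw [hE, LinearMap.mem_ker, Matrix.mulVecLin_apply]
  have hvE : v ∈ E := by
    rw [hmemE, hS, Matrix.sub_mulVec, Matrix.smul_mulVec, Matrix.one_mulVec, hBv, sub_self]
  have hcomm : S * M = M * S := by
    have h1 : Commute M (exp M) := (Commute.refl M).exp_right
    have h2 : Commute M S := ((Commute.one_right M).smul_right μ).sub_right h1
    exact h2.symm.eq
  have hinv : ∀ x ∈ E, M.mulVecLin x ∈ E := by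
    intro x hx
    rw [hmemE] at hx ⊢
    rw [Matrix.mulVecLin_apply, Matrix.mulVec_mulVec, hcomm, ← Matrix.mulVec_mulVec, hx,
      Matrix.mulVec_zero]
  haveI : Nontrivial E := nontrivial_of_ne ⟨v, hvE⟩ 0 (by simpa [Submodule.mk_eq_zero] using hv)
  obtain ⟨c, hc⟩ := Module.End.exists_eigenvalue (M.mulVecLin.restrict hinv)
  obtain ⟨w, hw⟩ := hc.exists_hasEigenvector
  have hMw : M *ᵥ (w : Fin N → ℂ) = c • (w : Fin N → ℂ) := by
    have h0 := hw.apply_eq_smul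
    have h2 : M.mulVecLin (w : Fin N → ℂ) = c • (w : Fin N → ℂ) := by
      rw [← LinearMap.restrict_coe_apply M.mulVecLin hinv w, h0, Submodule.coe_smul]
    rwa [Matrix.mulVecLin_apply] at h2
  have hw0 : (w : Fin N → ℂ) ≠ 0 := fun hz => hw.right (Subtype.ext hz)
  refine ⟨c, mem_spectrum_of_eigvec hw0 hMw, ?_⟩
  have h1 : exp M *ᵥ (w : Fin N → ℂ) = μ • (w : Fin N → ℂ) := by
    have := w.2
    rw [hmemE, hS, Matrix.sub_mulVec, Matrix.smul_mulVec, Matrix.one_mulVec,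
      sub_eq_zero] at this
    exact this.symm
  have h2 := exp_mulVec_eigvec hMw
  rw [h1] at h2
  have h3 : (μ - Complex.exp c) • (w : Fin N → ℂ) = 0 := by
    rw [sub_smul, h2, sub_self]
  rcases smul_eq_zero.mp h3 with h4 | h4
  · exact sub_eq_zero.mp h4
  · exact absurd h4 hw0

variable {N : ℕ}

lemma entry_abs_le (M : Matrix (Fin N) (Fin N) ℂ) (i j : Fin N) : ‖M i j‖ ≤ ‖M‖ := by
  have h1 : ‖M i j‖₊ ≤ ‖M‖₊ := by
    rw [Matrix.linfty_opNNNorm_def]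
    refine le_trans ?_ (Finset.le_sup (Finset.mem_univ i))
    exact Finset.single_le_sum (f := fun j' => ‖M i j'‖₊) (fun j _ => zero_le) (Finset.mem_univ j)
  exact_mod_cast h1

lemma pow_decay [Nonempty (Fin N)] (B : Matrix (Fin N) (Fin N) ℂ)
    (h : ∀ μ ∈ spectrum ℂ B, ‖μ‖₊ < 1) :
    ∃ r C : ℝ, 0 < r ∧ r < 1 ∧ 1 ≤ C ∧ ∀ k : ℕ, ‖B ^ k‖ ≤ C * r ^ k := by
  have hρ : spectralRadius ℂ B < 1 := by
    have := spectrum.spectralRadius_lt_of_forall_lt B (r := 1) h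
    simpa using this
  have hne : spectralRadius ℂ B ≠ ⊤ := hρ.ne_top
  set ρR : ℝ := (spectralRadius ℂ B).toReal with hρR
  have hρR1 : ρR < 1 := by
    have := (ENNReal.toReal_lt_toReal hne ENNReal.one_ne_top).mpr hρ
    simpa using this
  have hρR0 : 0 ≤ ρR := ENNReal.toReal_nonneg
  set r : ℝ := (ρR + 1) / 2 with hr
  have hr0 : 0 < r := by positivity
  have hr1 : r < 1 := by rw [hr]; linarith
  have hρr : spectralRadius ℂ B < ENNReal.ofReal r := by
    rw [ENNReal.lt_ofReal_iff_toReal_lt hne]; rw [hr]; linarith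
  have htd := spectrum.pow_norm_pow_one_div_tendsto_nhds_spectralRadius B
  have hev : ∀ᶠ k : ℕ in atTop,
      ENNReal.ofReal (‖B ^ k‖ ^ (1 / (k:ℝ))) < ENNReal.ofReal r :=
    htd.eventually_lt_const hρr
  obtain ⟨K, hK⟩ := (hev.and (eventually_ge_atTop 1)).exists_forall_of_atTop
  -- hK : ∀ k ≥ K, ofReal ... < ofReal r ∧ 1 ≤ k
  have hKb : ∀ k : ℕ, K ≤ k → ‖B ^ k‖ ≤ r ^ k := by
    intro k hk
    obtain ⟨hlt, hk1⟩ := hK k hk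
    rw [ENNReal.ofReal_lt_ofReal_iff hr0] at hlt
    have e2 : (‖B ^ k‖ ^ (1 / (k:ℝ))) ^ k = ‖B ^ k‖ := by
      rw [← Real.rpow_natCast (‖B ^ k‖ ^ (1 / (k:ℝ))) k, ← Real.rpow_mul (norm_nonneg _),
        one_div, inv_mul_cancel₀ (by exact_mod_cast Nat.one_le_iff_ne_zero.mp hk1 : (k:ℝ) ≠ 0),
        Real.rpow_one]
    calc ‖B ^ k‖ = (‖B ^ k‖ ^ (1 / (k:ℝ))) ^ k := e2.symm
      _ ≤ r ^ k := pow_le_pow_left₀ (Real.rpow_nonneg (norm_nonneg _) _) hlt.le k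
  set C₀ : ℝ := (Finset.range (K + 1)).sup' Finset.nonempty_range_add_one
    (fun k => ‖B ^ k‖ / r ^ k) with hC₀
  refine ⟨r, max C₀ 1, hr0, hr1, le_max_right _ _, fun k => ?_⟩
  rcases le_or_gt k K with hkK | hkK
  · have h1 : ‖B ^ k‖ / r ^ k ≤ C₀ :=
      Finset.le_sup' (fun k => ‖B ^ k‖ / r ^ k) (Finset.mem_range.mpr (Nat.lt_succ_of_le hkK))
    have h2 : (0:ℝ) < r ^ k := by positivity
    calc ‖B ^ k‖ = ‖B ^ k‖ / r ^ k * r ^ k := by field_simp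
      _ ≤ C₀ * r ^ k := mul_le_mul_of_nonneg_right h1 h2.le
      _ ≤ max C₀ 1 * r ^ k := mul_le_mul_of_nonneg_right (le_max_left _ _) h2.le
  · have h1 := hKb k hkK.le
    have h2 : (0:ℝ) < r ^ k := by positivity
    calc ‖B ^ k‖ ≤ r ^ k := h1
      _ ≤ max C₀ 1 * r ^ k := le_mul_of_one_le_left h2.le (le_max_right _ _)

lemma exp_entry_decay {n : ℕ} (hn : 1 ≤ n) (A : Matrix (Fin n) (Fin n) ℝ)
    (hspec : ∀ μ : ℂ, μ ∈ spectrum ℂ (A.map (algebraMap ℝ ℂ)) → μ.re < 0) :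
    ∃ C : ℝ, 0 < C ∧ ∃ δ : ℝ, 0 < δ ∧ ∀ τ : ℝ, 0 ≤ τ → ∀ i j,
      |exp (τ • A) i j| ≤ C * Real.exp (-δ * τ) := by
  haveI : Nonempty (Fin n) := ⟨⟨0, hn⟩⟩
  set A' : Matrix (Fin n) (Fin n) ℂ := A.map (algebraMap ℝ ℂ) with hA'
  have hmap : ∀ τ : ℝ, (exp (τ • A)).map (algebraMap ℝ ℂ) = exp ((τ:ℂ) • A') := by
    intro τ
    have h1 : (exp (τ • A)).map (algebraMap ℝ ℂ)
        = exp ((τ • A).map (algebraMap ℝ ℂ)) := by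
      have hc : Continuous fun M : Matrix (Fin n) (Fin n) ℝ => M.map (algebraMap ℝ ℂ) :=
        continuous_id.matrix_map (continuous_algebraMap ℝ ℂ)
      exact map_exp ((algebraMap ℝ ℂ).mapMatrix) hc (τ • A)
    have h2 : (τ • A).map (algebraMap ℝ ℂ) = (τ:ℂ) • A' := by
      ext i j
      simp [Matrix.map_apply, Matrix.smul_apply, smul_eq_mul, hA']
    rw [h1, h2]
  have hsp1 : ∀ μ ∈ spectrum ℂ (exp A'), ‖μ‖₊ < 1 := by
    intro μ hμ
    obtain ⟨c, hc, rfl⟩ := spectrum_exp_subset hμ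
    have hcre := hspec c hc
    have h1 : ‖Complex.exp c‖ < 1 := by
      rw [Complex.norm_exp]
      exact Real.exp_lt_one_iff.mpr hcre
    exact_mod_cast h1
  obtain ⟨r, C, hr0, hr1, hC1, hCb⟩ := pow_decay (exp A') hsp1
  have hcont : Continuous fun s : ℝ => ‖exp ((s:ℂ) • A')‖ :=
    (exp_continuous.comp (Complex.continuous_ofReal.smul continuous_const)).norm
  obtain ⟨s₀, _, hKmax'⟩ := isCompact_Icc.exists_isMaxOn (⟨0, by norm_num⟩ : (Icc (0:ℝ) 1).Nonempty)
    hcont.continuousOn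
  have hKmax : ∀ s ∈ Icc (0:ℝ) 1, ‖exp ((s:ℂ) • A')‖ ≤ ‖exp ((s₀:ℂ) • A')‖ :=
    fun s hs => hKmax' hs
  set K : ℝ := max (‖exp ((s₀:ℂ) • A')‖) 1 with hKdef
  have hK1 : 1 ≤ K := le_max_right _ _
  have hKb : ∀ s ∈ Icc (0:ℝ) 1, ‖exp ((s:ℂ) • A')‖ ≤ K :=
    fun s hs => (hKmax s hs).trans (le_max_left _ _)
  have hbound : ∀ τ : ℝ, 0 ≤ τ → ‖exp ((τ:ℂ) • A')‖ ≤ K * C / r * Real.exp (Real.log r * τ) := by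
    intro τ hτ
    set k : ℕ := ⌊τ⌋₊ with hk
    have hk1 : (k:ℝ) ≤ τ := Nat.floor_le hτ
    have hk2 : τ < k + 1 := Nat.lt_floor_add_one τ
    have hsplit : (τ:ℂ) • A' = ((τ - k : ℝ):ℂ) • A' + (((k:ℝ)):ℂ) • A' := by
      rw [← add_smul]; norm_num
    have hco : Commute (((τ - k : ℝ):ℂ) • A') ((((k:ℝ)):ℂ) • A') :=
      ((Commute.refl A').smul_left _).smul_right _
    have e2 : exp ((((k:ℝ)):ℂ) • A') = (exp A') ^ k := by
      rw [show ((((k:ℝ)):ℂ)) • A' = (k:ℕ) • A' by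
        rw [← Nat.cast_smul_eq_nsmul ℂ]; norm_num, Matrix.exp_nsmul]
    have e1 : ‖exp (((τ - k:ℝ):ℂ) • A')‖ ≤ K :=
      hKb (τ - k) ⟨by linarith, by linarith⟩
    have e3 : r ^ k ≤ Real.exp (Real.log r * τ) / r := by
      have h4 : (r:ℝ) ^ (k:ℝ) ≤ r ^ (τ - 1) :=
        Real.rpow_le_rpow_of_exponent_ge hr0 hr1.le (by linarith)
      rw [Real.rpow_natCast] at h4
      calc r ^ k ≤ r ^ (τ - 1 : ℝ) := h4
        _ = Real.exp (Real.log r * τ) / r := by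
          rw [Real.rpow_def_of_pos hr0, mul_sub, Real.exp_sub, mul_one, Real.exp_log hr0]
    calc ‖exp ((τ:ℂ) • A')‖
        = ‖exp (((τ - k:ℝ):ℂ) • A') * exp ((((k:ℝ)):ℂ) • A')‖ := by
          rw [← Matrix.exp_add_of_commute _ _ hco, ← hsplit]
      _ ≤ ‖exp (((τ - k:ℝ):ℂ) • A')‖ * ‖exp ((((k:ℝ)):ℂ) • A')‖ := norm_mul_le _ _
      _ ≤ K * (C * r ^ k) := by
          refine mul_le_mul e1 ?_ (norm_nonneg _) (by linarith)
          rw [e2]; exact hCb k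
      _ ≤ K * (C * (Real.exp (Real.log r * τ) / r)) := by
          refine mul_le_mul_of_nonneg_left (mul_le_mul_of_nonneg_left e3 (by linarith)) (by linarith)
      _ = K * C / r * Real.exp (Real.log r * τ) := by ring
  refine ⟨K * C / r, by positivity, -Real.log r, neg_pos.mpr (Real.log_neg hr0 hr1),
    fun τ hτ i j => ?_⟩
  have h5 : |exp (τ • A) i j| = ‖exp ((τ:ℂ) • A') i j‖ := by
    rw [← hmap τ]
    simp [Matrix.map_apply]
  rw [h5, neg_neg]
  exact (entry_abs_le _ i j).trans (hbound τ hτ)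

lemma entry_cont {n : ℕ} (A : Matrix (Fin n) (Fin n) ℝ) (i j : Fin n) :
    Continuous fun τ : ℝ => exp (τ • A) i j := by
  have h1 : Continuous fun τ : ℝ => exp (τ • A) :=
    exp_continuous.comp (continuous_id.smul continuous_const)
  exact (continuous_apply j).comp ((continuous_apply i).comp h1)

lemma entry_hasDerivAt {n : ℕ} (A B : Matrix (Fin n) (Fin n) ℝ) (i j : Fin n) (τ : ℝ) :
    HasDerivAt (fun t : ℝ => (exp (t • A) * B) i j) ((exp (τ • A) * A * B) i j) τ := by
  have hd := hasDerivAt_exp_smul_const (𝕂 := ℝ) A τ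
  let L : Matrix (Fin n) (Fin n) ℝ →ₗ[ℝ] ℝ :=
    { toFun := fun M => (M * B) i j
      map_add' := by intros; simp [Matrix.add_mul]
      map_smul' := by intros; simp [Matrix.smul_mul] }
  let LC := LinearMap.toContinuousLinearMap L
  have h2 := LC.hasFDerivAt.comp_hasDerivAt τ hd
  exact h2

lemma isUnit_of_spec {n : ℕ} (A : Matrix (Fin n) (Fin n) ℝ)
    (hspec : ∀ μ : ℂ, μ ∈ spectrum ℂ (A.map (algebraMap ℝ ℂ)) → μ.re < 0) : IsUnit A := by
  by_contra h
  rw [Matrix.isUnit_iff_isUnit_det, isUnit_iff_ne_zero, not_not] at h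
  have h0 : (0:ℂ) ∈ spectrum ℂ (A.map (algebraMap ℝ ℂ)) := by
    rw [spectrum.mem_iff, Matrix.isUnit_iff_isUnit_det, isUnit_iff_ne_zero, not_not]
    rw [map_zero, zero_sub, Matrix.det_neg]
    have hd : (A.map (algebraMap ℝ ℂ)).det = 0 := by
      have := RingHom.map_det (algebraMap ℝ ℂ) A
      rw [h, map_zero] at this
      rw [show A.map (algebraMap ℝ ℂ) = (algebraMap ℝ ℂ).mapMatrix A from rfl, ← this]
    rw [hd, mul_zero]
  simpa using hspec 0 h0

end S6

/-- if every complex eigenvalue of the real `n×n` matrix `A` has negative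
real part, then `A` is invertible, `τ ↦ exp(τA)` is integrable on `[0, ∞)` entrywise,
and `∫₀^∞ exp(τA) dτ = −A⁻¹`. -/
theorem stmt6 (n : ℕ) (hn : 1 ≤ n) (A : Matrix (Fin n) (Fin n) ℝ)
    (hspec : ∀ μ : ℂ, μ ∈ spectrum ℂ (A.map (algebraMap ℝ ℂ)) → μ.re < 0) :
    IsUnit A ∧
    (∀ i j, IntegrableOn (fun τ : ℝ => (NormedSpace.exp (τ • A)) i j) (Set.Ici 0)) ∧
    (∀ i j, (∫ τ in Set.Ioi (0 : ℝ), (NormedSpace.exp (τ • A)) i j) = (-A⁻¹) i j) := by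
  have hA : IsUnit A := S6.isUnit_of_spec A hspec
  obtain ⟨C, hC0, δ, hδ0, hdecay⟩ := S6.exp_entry_decay hn A hspec
  have hcont := S6.entry_cont A
  -- integrability
  have hint : ∀ i j, IntegrableOn (fun τ : ℝ => exp (τ • A) i j) (Set.Ici 0) := by
    intro i j
    have hi : IntegrableOn (fun τ : ℝ => C * Real.exp (-δ * τ)) (Set.Ici 0) := by
      rw [integrableOn_Ici_iff_integrableOn_Ioi]
      exact (exp_neg_integrableOn_Ioi 0 hδ0).const_mul C
    refine hi.mono' ((hcont i j).aestronglyMeasurable.restrict) ?_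
    refine (ae_restrict_iff' measurableSet_Ici).mpr (Filter.Eventually.of_forall fun τ hτ => ?_)
    simpa using hdecay τ hτ i j
  -- entries tend to zero
  have htend0 : ∀ i j, Tendsto (fun τ : ℝ => exp (τ • A) i j) atTop (𝓝 0) := by
    intro i j
    have hg : Tendsto (fun τ : ℝ => C * Real.exp (-δ * τ)) atTop (𝓝 (0:ℝ)) := by
      have h1 : Tendsto (fun τ : ℝ => δ * τ) atTop atTop :=
        Tendsto.const_mul_atTop hδ0 tendsto_id
      have h2 : Tendsto (fun τ : ℝ => Real.exp (-(δ * τ))) atTop (𝓝 (0:ℝ)) :=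
        Real.tendsto_exp_neg_atTop_nhds_zero.comp h1
      have h3 := h2.const_mul C
      simpa [neg_mul, mul_zero] using h3
    refine squeeze_zero_norm' ?_ hg
    exact eventually_atTop.mpr ⟨0, fun τ hτ => by simpa using hdecay τ hτ i j⟩
  refine ⟨hA, hint, fun i j => ?_⟩
  have hmul : A * A⁻¹ = 1 := Matrix.mul_nonsing_inv A ((Matrix.isUnit_iff_isUnit_det A).mp hA)
  have hder : ∀ τ ∈ Set.Ici (0:ℝ), HasDerivAt (fun t : ℝ => (exp (t • A) * A⁻¹) i j)
      (exp (τ • A) i j) τ := by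
    intro τ _
    have h1 := S6.entry_hasDerivAt A A⁻¹ i j τ
    rwa [mul_assoc, hmul, mul_one] at h1
  have hf'int : IntegrableOn (fun τ : ℝ => exp (τ • A) i j) (Set.Ioi 0) :=
    (hint i j).mono_set Set.Ioi_subset_Ici_self
  have htendf : Tendsto (fun τ : ℝ => (exp (τ • A) * A⁻¹) i j) atTop (𝓝 (0:ℝ)) := by
    have h1 : ∀ τ : ℝ, (exp (τ • A) * A⁻¹) i j = ∑ k, exp (τ • A) i k * A⁻¹ k j :=
      fun τ => Matrix.mul_apply
    simp only [h1]
    have h2 : Tendsto (fun τ : ℝ => ∑ k, exp (τ • A) i k * A⁻¹ k j) atTop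
        (𝓝 (∑ k : Fin n, 0 * A⁻¹ k j)) :=
      tendsto_finset_sum _ (fun k _ => (htend0 i k).mul_const _)
    simpa using h2
  have hFTC := MeasureTheory.integral_Ioi_of_hasDerivAt_of_tendsto' hder hf'int htendf
  rw [hFTC]
  simp [Matrix.neg_apply, zero_smul, NormedSpace.exp_zero, Matrix.one_mul]
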